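/- arXiv:1410.3286 — 6 statements merged into one kernel-verified Lean document; each statement's English description precedes it below -/
import Mathlib

section
/- For every symmetric traceless 3×3 matrix Q all of whose eigenvalues lie in the open interval (-1/3, 2/3), the supremum over symmetric traceless B of B:Q − log∫_{S²} e^{m·Bm} dm is finite. -/
open MeasureTheory

noncomputable def sphereMeasure :
    Measure (Metric.sphere (0 : EuclideanSpace ℝ (Fin 3)) 1) :=
  (volume : Measure (EuclideanSpace ℝ (Fin 3))).toSphere

noncomputable def quadForm (B : Matrix (Fin 3) (Fin 3) ℝ)
    (m : EuclideanSpace ℝ (Fin 3)) : ℝ :=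
  ∑ i, ∑ j, B i j * m i * m j

noncomputable def omegaFn (B : Matrix (Fin 3) (Fin 3) ℝ) : ℝ :=
  Real.log (∫ m : Metric.sphere (0 : EuclideanSpace ℝ (Fin 3)) 1,
    Real.exp (quadForm B m) ∂sphereMeasure)

section Aux

open Metric Set
open scoped ENNReal Pointwise

local notation "E3" => EuclideanSpace ℝ (Fin 3)
local notation "S2" => Metric.sphere (0 : EuclideanSpace ℝ (Fin 3)) 1

instance : IsFiniteMeasure sphereMeasure := by unfold sphereMeasure; infer_instance

lemma BM.spectral_entry {A : Matrix (Fin 3) (Fin 3) ℝ} (hA : A.IsHermitian) :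
  ∃ U : Matrix (Fin 3) (Fin 3) ℝ,
    (∀ i j, ∑ k, U i k * U j k = if i = j then 1 else 0) ∧
    (∀ k l, ∑ i, U i k * U i l = if k = l then 1 else 0) ∧
    (∀ i j, A i j = ∑ k, hA.eigenvalues k * U i k * U j k) := by
  refine ⟨(hA.eigenvectorUnitary : Matrix (Fin 3) (Fin 3) ℝ), ?_, ?_, ?_⟩
  · intro i j
    have h := (Matrix.mem_unitaryGroup_iff).mp hA.eigenvectorUnitary.2
    have := congrFun (congrFun h i) j
    simpa [Matrix.mul_apply, Matrix.one_apply, Matrix.star_apply, mul_comm] using this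
  · intro k l
    have h := (Matrix.mem_unitaryGroup_iff').mp hA.eigenvectorUnitary.2
    have := congrFun (congrFun h k) l
    simpa [Matrix.mul_apply, Matrix.one_apply, Matrix.star_apply] using this
  · intro i j
    have h := hA.spectral_theorem
    have := congrFun (congrFun h i) j
    rw [this]
    simp [Matrix.mul_apply, Matrix.diagonal_apply, Finset.sum_ite_eq, Matrix.star_apply]
    rw [Finset.sum_congr rfl]
    intro k _
    ring

lemma BM.bilin_expand (lam : Fin 3 → ℝ) (U : Matrix (Fin 3) (Fin 3) ℝ) (x y : Fin 3 → ℝ) :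
    ∑ i, ∑ j, (∑ k, lam k * U i k * U j k) * x i * y j
      = ∑ k, lam k * (∑ i, U i k * x i) * (∑ j, U j k * y j) := by
  simp only [Fin.sum_univ_three]; ring

lemma BM.pair_expand (lam : Fin 3 → ℝ) (U Q : Matrix (Fin 3) (Fin 3) ℝ) :
    ∑ i, ∑ j, (∑ k, lam k * U i k * U j k) * Q i j
      = ∑ k, lam k * (∑ i, ∑ j, Q i j * U i k * U j k) := by
  simp only [Fin.sum_univ_three]; ring

lemma BM.norm_preserve (U : Matrix (Fin 3) (Fin 3) ℝ)
    (hU : ∀ i j, ∑ k, U i k * U j k = if i = j then 1 else 0) (x : Fin 3 → ℝ) :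
    ∑ k, (∑ i, U i k * x i)^2 = ∑ i, (x i)^2 := by
  have h01 := hU 0 1; have h02 := hU 0 2; have h12 := hU 1 2
  have h00 := hU 0 0; have h11 := hU 1 1; have h22 := hU 2 2
  simp only [Fin.sum_univ_three, if_true, eq_self_iff_true] at h00 h11 h22
  simp only [Fin.sum_univ_three, show ((0:Fin 3) = 1) = False by simp, if_false] at h01
  simp only [Fin.sum_univ_three, show ((0:Fin 3) = 2) = False by simp, if_false] at h02
  simp only [Fin.sum_univ_three, show ((1:Fin 3) = 2) = False by simp, if_false] at h12
  simp only [Fin.sum_univ_three]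
  linear_combination (x 0)^2 * h00 + (x 1)^2 * h11 + (x 2)^2 * h22
    + 2*(x 0)*(x 1)*h01 + 2*(x 0)*(x 2)*h02 + 2*(x 1)*(x 2)*h12

lemma BM.normsq_eq (w : E3) : ∑ i, (w i)^2 = ‖w‖^2 := by
  rw [EuclideanSpace.norm_eq, Real.sq_sqrt (by positivity)]
  exact Finset.sum_congr rfl fun i _ => by rw [Real.norm_eq_abs, sq_abs]

lemma BM.cap_measure_lb {r : ℝ} (hr0 : 0 < r) (hr1 : r ≤ 1) (v : E3) (hv : ‖v‖ = 1) :
    volume (Metric.ball ((2:ℝ)⁻¹ • v) (r/5))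
      ≤ sphereMeasure {m : S2 | ‖(m : E3) - v‖ < r} := by
  set s : Set S2 := {m | ‖(m : E3) - v‖ < r} with hs
  have hmeas : MeasurableSet s := by
    have : IsOpen s := by
      have hc : Continuous fun m : S2 => ‖(m : E3) - v‖ :=
        (continuous_subtype_val.sub continuous_const).norm
      exact isOpen_lt hc continuous_const
    exact this.measurableSet
  have happ := (volume : Measure E3).toSphere_apply' hmeas
  have hdim : ((Module.finrank ℝ E3 : ℕ) : ℝ≥0∞) = 3 := by
    simp [finrank_euclideanSpace_fin]
  have hsub : Metric.ball ((2:ℝ)⁻¹ • v) (r/5) ⊆ Ioo (0:ℝ) 1 • ((↑) '' s : Set E3) := by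
    intro x hx
    have hxball : ‖x - (2:ℝ)⁻¹ • v‖ < r/5 := by
      simpa [dist_eq_norm] using hx
    have hhalf : ‖(2:ℝ)⁻¹ • v‖ = 1/2 := by
      rw [norm_smul, hv]; norm_num
    have hnx : |‖x‖ - 1/2| < r/5 := by
      have h1 : ‖x‖ - 1/2 ≤ ‖x - (2:ℝ)⁻¹ • v‖ := by
        have := norm_sub_norm_le x ((2:ℝ)⁻¹ • v); rw [hhalf] at this; linarith
      have h2 : 1/2 - ‖x‖ ≤ ‖x - (2:ℝ)⁻¹ • v‖ := by
        have := norm_sub_norm_le ((2:ℝ)⁻¹ • v) x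
        rw [hhalf, norm_sub_rev] at this; linarith
      rw [abs_lt]; constructor <;> linarith
    have hr5 : r/5 ≤ 1/5 := by linarith
    have hxpos : 0 < ‖x‖ := by rw [abs_lt] at hnx; linarith
    have hxlt : ‖x‖ < 1 := by rw [abs_lt] at hnx; linarith
    have hxne : ‖x‖ ≠ 0 := ne_of_gt hxpos
    set m : E3 := ‖x‖⁻¹ • x with hm
    have hmnorm : ‖m‖ = 1 := by
      rw [hm, norm_smul, Real.norm_eq_abs, abs_inv, abs_of_nonneg (norm_nonneg x),
        inv_mul_cancel₀ hxne]
    have hmem : m ∈ S2 := by simpa [mem_sphere_iff_norm] using hmnorm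
    have key : ‖m - v‖ < r := by
      have tri : ‖m - v‖ ≤ ‖m - (2:ℝ)•x‖ + ‖(2:ℝ)•x - v‖ := by
        have := norm_add_le (m - (2:ℝ)•x) ((2:ℝ)•x - v)
        simpa [sub_add_sub_cancel] using this
      have e1 : ‖m - (2:ℝ)•x‖ = |1 - 2*‖x‖| := by
        rw [hm, ← sub_smul, norm_smul, Real.norm_eq_abs]
        rw [show |‖x‖⁻¹ - 2| * ‖x‖ = |‖x‖⁻¹ - 2| * |‖x‖| from by
          rw [abs_of_nonneg (norm_nonneg x)]]
        rw [← abs_mul, sub_mul, inv_mul_cancel₀ hxne]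
      have e2 : ‖(2:ℝ)•x - v‖ = 2 * ‖x - (2:ℝ)⁻¹ • v‖ := by
        have : (2:ℝ)•x - v = (2:ℝ) • (x - (2:ℝ)⁻¹ • v) := by
          rw [smul_sub, smul_inv_smul₀ (by norm_num : (2:ℝ) ≠ 0)]
        rw [this, norm_smul]; norm_num
      have e1' : |1 - 2*‖x‖| < 2*(r/5) := by
        rw [abs_lt] at hnx ⊢; constructor <;> linarith
      have e2' : 2 * ‖x - (2:ℝ)⁻¹ • v‖ < 2*(r/5) := by linarith
      calc ‖m - v‖ ≤ ‖m - (2:ℝ)•x‖ + ‖(2:ℝ)•x - v‖ := tri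
        _ < 2*(r/5) + 2*(r/5) := by rw [e1, e2]; linarith
        _ ≤ r := by linarith
    refine Set.mem_smul.2 ⟨‖x‖, ?_, m, ⟨⟨m, hmem⟩, key, rfl⟩, ?_⟩
    · exact ⟨hxpos, hxlt⟩
    · rw [hm, smul_inv_smul₀ hxne]
  calc volume (Metric.ball ((2:ℝ)⁻¹ • v) (r/5))
      ≤ volume (Ioo (0:ℝ) 1 • ((↑) '' s : Set E3)) := measure_mono hsub
    _ ≤ ((Module.finrank ℝ E3 : ℕ) : ℝ≥0∞) * volume (Ioo (0:ℝ) 1 • ((↑) '' s : Set E3)) := by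
        rw [hdim]; exact le_mul_of_one_le_left (zero_le) (by norm_num)
    _ = sphereMeasure s := happ.symm

lemma BM.abs_coord_le (x : E3) (i : Fin 3) : |x i| ≤ ‖x‖ := by
  rw [EuclideanSpace.norm_eq, ← Real.sqrt_sq_eq_abs]
  apply Real.sqrt_le_sqrt
  have : x i ^ 2 ≤ ∑ j, x j ^ 2 :=
    Finset.single_le_sum (f := fun j => x j ^ 2) (fun j _ => sq_nonneg _) (Finset.mem_univ i)
  simpa [Real.norm_eq_abs, sq_abs] using this

lemma BM.quad_le_sum_abs (B : Matrix (Fin 3) (Fin 3) ℝ) (m : S2) :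
    |quadForm B m| ≤ ∑ i, ∑ j, |B i j| := by
  have hm : ‖(m : E3)‖ = 1 := by simpa using mem_sphere_iff_norm.1 m.2
  unfold quadForm
  refine (Finset.abs_sum_le_sum_abs _ _).trans (Finset.sum_le_sum fun i _ => ?_)
  refine (Finset.abs_sum_le_sum_abs _ _).trans (Finset.sum_le_sum fun j _ => ?_)
  have h1 : |(m : E3) i| ≤ 1 := (BM.abs_coord_le _ i).trans_eq hm
  have h2 : |(m : E3) j| ≤ 1 := (BM.abs_coord_le _ j).trans_eq hm
  calc |B i j * (m : E3) i * (m : E3) j| = |B i j| * |(m : E3) i| * |(m : E3) j| := by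
        rw [abs_mul, abs_mul]
    _ ≤ |B i j| * 1 * 1 := by
        apply mul_le_mul (mul_le_mul le_rfl h1 (abs_nonneg _) (abs_nonneg _)) h2 (abs_nonneg _)
        positivity
    _ = |B i j| := by ring

lemma BM.quad_continuous (B : Matrix (Fin 3) (Fin 3) ℝ) :
    Continuous fun m : S2 => quadForm B (m : E3) := by
  unfold quadForm
  refine continuous_finset_sum _ fun i _ => continuous_finset_sum _ fun j _ => ?_
  fun_prop

lemma BM.integrable_exp_quad (B : Matrix (Fin 3) (Fin 3) ℝ) :
    Integrable (fun m : S2 => Real.exp (quadForm B (m : E3))) sphereMeasure := by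
  refine Integrable.mono' (integrable_const (Real.exp (∑ i, ∑ j, |B i j|)))
    ((Real.continuous_exp.comp (BM.quad_continuous B)).aestronglyMeasurable) ?_
  filter_upwards with m
  rw [Real.norm_eq_abs, abs_of_pos (Real.exp_pos _)]
  exact Real.exp_le_exp.2 ((le_abs_self _).trans (BM.quad_le_sum_abs B m))

lemma BM.integral_exp_quad_lb (B : Matrix (Fin 3) (Fin 3) ℝ) {s : Set S2}
    (hs : MeasurableSet s) {a : ℝ} (h : ∀ m ∈ s, a ≤ quadForm B (m : E3)) :
    Real.exp a * (sphereMeasure s).toReal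
      ≤ ∫ m : S2, Real.exp (quadForm B (m : E3)) ∂sphereMeasure := by
  have hint := BM.integrable_exp_quad B
  have h1 : Real.exp a * (sphereMeasure s).toReal
      ≤ ∫ m in s, Real.exp (quadForm B (m : E3)) ∂sphereMeasure :=
    by have := setIntegral_ge_of_const_le_real hs (measure_ne_top _ _)
         (fun m hm => Real.exp_le_exp.2 (h m hm)) hint.integrableOn
       exact this
  refine h1.trans (setIntegral_le_integral hint ?_)
  filter_upwards with m using (Real.exp_pos _).le

end Aux

/-- If `Q` is symmetric traceless with all eigenvalues in `(-1/3, 2/3)`, then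
`sup_B (B:Q − ω(B))` over symmetric traceless `B` is finite. -/
theorem sup_legendre_finite (Q : Matrix (Fin 3) (Fin 3) ℝ)
    (hQ : Q.IsHermitian) (htr : Q.trace = 0)
    (heig : ∀ i, hQ.eigenvalues i ∈ Set.Ioo (-(1 / 3) : ℝ) (2 / 3)) :
    ∃ C : ℝ, ∀ B : Matrix (Fin 3) (Fin 3) ℝ, B.IsSymm → B.trace = 0 →
      (∑ i, ∑ j, B i j * Q i j) - omegaFn B ≤ C := by
  classical
  set ev := hQ.eigenvalues with hev
  obtain ⟨V, hV1, hV2, hV3⟩ := BM.spectral_entry hQ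
  obtain ⟨δ, hδpos, hδle⟩ : ∃ δ : ℝ, 0 < δ ∧ ∀ i, δ ≤ ev i + 1/3 ∧ δ ≤ 2/3 - ev i := by
    refine ⟨Finset.univ.inf' Finset.univ_nonempty
      (fun i => min (ev i + 1/3) (2/3 - ev i)), ?_, ?_⟩
    · rw [Finset.lt_inf'_iff]
      intro i _
      rcases heig i with ⟨h1, h2⟩
      rw [lt_min_iff]
      constructor <;> linarith
    · intro i
      have h := Finset.inf'_le (f := fun i => min (ev i + 1/3) (2/3 - ev i))
        (b := i) (Finset.mem_univ i)
      exact ⟨h.trans (min_le_left _ _), h.trans (min_le_right _ _)⟩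
  have hδ1 : δ ≤ 1/2 := by have h := hδle 0; linarith [h.1, h.2]
  set r := Real.sqrt δ with hrdef
  have hr0 : 0 < r := Real.sqrt_pos.2 hδpos
  have hr2 : r^2 = δ := Real.sq_sqrt hδpos.le
  have hr1 : r ≤ 1 := by nlinarith
  set c := (volume (Metric.ball ((0 : EuclideanSpace ℝ (Fin 3))) (r/5))).toReal with hcdef
  have hcpos : 0 < c := by
    rw [hcdef]
    refine ENNReal.toReal_pos ?_ ?_
    · exact (Metric.measure_ball_pos volume _ (by positivity)).ne'
    · exact measure_ball_lt_top.ne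
  refine ⟨-Real.log c, ?_⟩
  intro B hBs hBtr
  have hB : B.IsHermitian := by
    ext i j
    rw [Matrix.conjTranspose_apply, star_trivial]
    have h := congrFun (congrFun hBs i) j
    rwa [Matrix.transpose_apply] at h
  set β := hB.eigenvalues with hβdef
  obtain ⟨U, hU1, hU2, hU3⟩ := BM.spectral_entry hB
  have hU1e : ∀ i j, U i 0 * U j 0 + U i 1 * U j 1 + U i 2 * U j 2
      = if i = j then 1 else 0 := fun i j => by
    have h := hU1 i j; rwa [Fin.sum_univ_three] at h
  have hU2e : ∀ k l, U 0 k * U 0 l + U 1 k * U 1 l + U 2 k * U 2 l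
      = if k = l then 1 else 0 := fun k l => by
    have h := hU2 k l; rwa [Fin.sum_univ_three] at h
  have hU3e : ∀ i j, B i j = β 0 * U i 0 * U j 0 + β 1 * U i 1 * U j 1 + β 2 * U i 2 * U j 2 :=
    fun i j => by
    have h := hU3 i j; rwa [Fin.sum_univ_three] at h
  have htrB' : B 0 0 + B 1 1 + B 2 2 = 0 := by
    have h := hBtr
    simpa [Matrix.trace, Matrix.diag, Fin.sum_univ_three] using h
  have htrQ' : Q 0 0 + Q 1 1 + Q 2 2 = 0 := by
    simpa [Matrix.trace, Matrix.diag, Fin.sum_univ_three] using htr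
  have hβsum : β 0 + β 1 + β 2 = 0 := by
    have h00 := hU3e 0 0; have h11 := hU3e 1 1; have h22 := hU3e 2 2
    have c0 : U 0 0 * U 0 0 + U 1 0 * U 1 0 + U 2 0 * U 2 0 = 1 := by
      have h := hU2e 0 0; rwa [if_pos rfl] at h
    have c1 : U 0 1 * U 0 1 + U 1 1 * U 1 1 + U 2 1 * U 2 1 = 1 := by
      have h := hU2e 1 1; rwa [if_pos rfl] at h
    have c2 : U 0 2 * U 0 2 + U 1 2 * U 1 2 + U 2 2 * U 2 2 = 1 := by
      have h := hU2e 2 2; rwa [if_pos rfl] at h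
    linear_combination htrB' - h00 - h11 - h22 - β 0 * c0 - β 1 * c1 - β 2 * c2
  obtain ⟨kM, -, hkM⟩ := Finset.exists_max_image Finset.univ β ⟨0, Finset.mem_univ 0⟩
  obtain ⟨km, -, hkm⟩ := Finset.exists_min_image Finset.univ β ⟨0, Finset.mem_univ 0⟩
  have hkM' : ∀ k, β k ≤ β kM := fun k => hkM k (Finset.mem_univ k)
  have hkm' : ∀ k, β km ≤ β k := fun k => hkm k (Finset.mem_univ k)
  -- the top eigenvector
  set v : EuclideanSpace ℝ (Fin 3) := (WithLp.equiv 2 (Fin 3 → ℝ)).symm (fun i => U i kM)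
    with hvdef
  have hvi : ∀ i, v i = U i kM := fun i => rfl
  have hv : ‖v‖ = 1 := by
    have h1 : ∑ i, (v i)^2 = 1 := by
      have h := hU2 kM kM
      rw [if_pos rfl] at h
      rw [← h]
      exact Finset.sum_congr rfl fun i _ => by rw [hvi, sq]
    have h2 := BM.normsq_eq v
    rw [← Real.sqrt_sq (norm_nonneg v), ← h2, h1, Real.sqrt_one]
  -- lower bound for the quadratic form on the cap
  have hcap : ∀ m : Metric.sphere (0 : EuclideanSpace ℝ (Fin 3)) 1,
      ‖(m : EuclideanSpace ℝ (Fin 3)) - v‖ < r →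
      β kM - (β kM - β km) * δ ≤ quadForm B m := by
    intro m hm
    set x : Fin 3 → ℝ := fun i => (m : EuclideanSpace ℝ (Fin 3)) i with hxdef
    have hxi : ∀ i, x i = (m : EuclideanSpace ℝ (Fin 3)) i := fun i => rfl
    set y : Fin 3 → ℝ := fun k => ∑ i, U i k * x i with hydef
    have hyk : ∀ k, y k = ∑ i, U i k * x i := fun k => rfl
    have hmnorm : ‖(m : EuclideanSpace ℝ (Fin 3))‖ = 1 := by
      simpa using mem_sphere_iff_norm.1 m.2
    have hq : quadForm B (m : EuclideanSpace ℝ (Fin 3)) = ∑ k, β k * (y k)^2 := by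
      have e1 : quadForm B (m : EuclideanSpace ℝ (Fin 3))
          = ∑ i, ∑ j, (∑ k, β k * U i k * U j k) * x i * x j :=
        Finset.sum_congr rfl fun i _ => Finset.sum_congr rfl fun j _ => by rw [hU3 i j, hxi, hxi]
      rw [e1, BM.bilin_expand]
      exact Finset.sum_congr rfl fun k _ => by rw [sq, hyk k]; ring
    have hy1 : ∑ k, (y k)^2 = 1 := by
      have h := BM.norm_preserve U hU1 x
      have h2 : ∑ i, (x i)^2 = 1 := by
        have h3 := BM.normsq_eq (m : EuclideanSpace ℝ (Fin 3))
        rw [hmnorm] at h3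
        simpa [hxi] using h3
      rw [← h2, ← h]
    have hyv : ∀ k, (∑ i, U i k * v i) = if k = kM then (1:ℝ) else 0 := fun k => by
      rw [← hU2 k kM]
      exact Finset.sum_congr rfl fun i _ => by rw [hvi]
    have hdist : ∑ k, (y k - (if k = kM then (1:ℝ) else 0))^2
        = ‖(m : EuclideanSpace ℝ (Fin 3)) - v‖^2 := by
      have h1 := BM.norm_preserve U hU1 (fun i => x i - v i)
      have h2 : ∀ k, (∑ i, U i k * (x i - v i)) = y k - (if k = kM then (1:ℝ) else 0) :=
        fun k => by
        rw [← hyv k, hyk k, ← Finset.sum_sub_distrib]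
        exact Finset.sum_congr rfl fun i _ => by ring
      calc ∑ k, (y k - (if k = kM then (1:ℝ) else 0))^2
          = ∑ k, (∑ i, U i k * (x i - v i))^2 :=
            (Finset.sum_congr rfl fun k _ => by rw [h2 k]).symm
        _ = ∑ i, (x i - v i)^2 := h1
        _ = ‖(m : EuclideanSpace ℝ (Fin 3)) - v‖^2 := by
            rw [← BM.normsq_eq ((m : EuclideanSpace ℝ (Fin 3)) - v)]
            exact Finset.sum_congr rfl fun i _ => by rw [hxi, PiLp.sub_apply]
    have hterm : ∀ k, (β km - β kM) * (y k - (if k = kM then (1:ℝ) else 0))^2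
        ≤ (β k - β kM) * (y k)^2 := by
      intro k
      by_cases hk : k = kM
      · subst hk
        rw [if_pos rfl]
        have hp : 0 ≤ (β k - β km) * (y k - 1)^2 :=
          mul_nonneg (by linarith [hkm' k]) (sq_nonneg _)
        nlinarith
      · rw [if_neg hk, sub_zero]
        exact mul_le_mul_of_nonneg_right (by linarith [hkm' k]) (sq_nonneg _)
    have hsum1 : ∑ k, β k * (y k)^2
        = β kM * (∑ k, (y k)^2) + ∑ k, (β k - β kM) * (y k)^2 := by
      rw [Finset.mul_sum, ← Finset.sum_add_distrib]
      exact Finset.sum_congr rfl fun k _ => by ring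
    have hsum2 : (β km - β kM) * (∑ k, (y k - (if k = kM then (1:ℝ) else 0))^2)
        ≤ ∑ k, (β k - β kM) * (y k)^2 := by
      rw [Finset.mul_sum]
      exact Finset.sum_le_sum fun k _ => hterm k
    have hmv2 : ‖(m : EuclideanSpace ℝ (Fin 3)) - v‖^2 ≤ δ := by
      nlinarith [norm_nonneg ((m : EuclideanSpace ℝ (Fin 3)) - v)]
    have hstep : (β km - β kM) * δ ≤ (β km - β kM) * ‖(m : EuclideanSpace ℝ (Fin 3)) - v‖^2 :=
      mul_le_mul_of_nonpos_left hmv2 (by linarith [hkm' kM])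
    rw [hdist] at hsum2
    rw [hq, hsum1, hy1, mul_one]
    linarith
  -- the pairing bound
  set q : Fin 3 → ℝ := fun k => ∑ i, ∑ j, Q i j * U i k * U j k with hqdef
  have hqk' : ∀ k, q k = ∑ i, ∑ j, Q i j * U i k * U j k := fun k => rfl
  have hP : (∑ i, ∑ j, B i j * Q i j) = ∑ k, β k * q k := by
    have e1 : (∑ i, ∑ j, B i j * Q i j)
        = ∑ i, ∑ j, (∑ k, β k * U i k * U j k) * Q i j :=
      Finset.sum_congr rfl fun i _ => Finset.sum_congr rfl fun j _ => by rw [hU3 i j]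
    rw [e1, BM.pair_expand]
  have hql : ∀ k, δ - 1/3 ≤ q k ∧ q k ≤ 2/3 - δ := by
    intro k
    set z : Fin 3 → ℝ := fun l => ∑ i, V i l * U i k with hzdef
    have hzl : ∀ l, z l = ∑ i, V i l * U i k := fun l => rfl
    have hqk : q k = ∑ l, ev l * (z l)^2 := by
      rw [hqk' k]
      have e1 : (∑ i, ∑ j, Q i j * U i k * U j k)
          = ∑ i, ∑ j, (∑ l, ev l * V i l * V j l) * U i k * U j k :=
        Finset.sum_congr rfl fun i _ => Finset.sum_congr rfl fun j _ => by rw [hV3 i j]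
      rw [e1, BM.bilin_expand]
      exact Finset.sum_congr rfl fun l _ => by rw [sq, hzl l]; ring
    have hz1 : ∑ l, (z l)^2 = 1 := by
      have h := BM.norm_preserve V hV1 (fun i => U i k)
      have h2 : ∑ i, (U i k)^2 = 1 := by
        have h3 := hU2 k k
        rw [if_pos rfl] at h3
        rw [← h3]
        exact Finset.sum_congr rfl fun i _ => by rw [sq]
      rw [← h2, ← h]
    constructor
    · rw [hqk]
      have : ∑ l, (δ - 1/3) * (z l)^2 ≤ ∑ l, ev l * (z l)^2 :=
        Finset.sum_le_sum fun l _ =>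
          mul_le_mul_of_nonneg_right (by linarith [(hδle l).1]) (sq_nonneg _)
      calc δ - 1/3 = (δ - 1/3) * ∑ l, (z l)^2 := by rw [hz1, mul_one]
        _ = ∑ l, (δ - 1/3) * (z l)^2 := Finset.mul_sum _ _ _
        _ ≤ ∑ l, ev l * (z l)^2 := this
    · rw [hqk]
      have : ∑ l, ev l * (z l)^2 ≤ ∑ l, (2/3 - δ) * (z l)^2 :=
        Finset.sum_le_sum fun l _ =>
          mul_le_mul_of_nonneg_right (by linarith [(hδle l).2]) (sq_nonneg _)
      calc ∑ l, ev l * (z l)^2 ≤ ∑ l, (2/3 - δ) * (z l)^2 := this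
        _ = (2/3 - δ) * ∑ l, (z l)^2 := (Finset.mul_sum _ _ _).symm
        _ = 2/3 - δ := by rw [hz1, mul_one]
  have hqsum : q 0 + q 1 + q 2 = 0 := by
    have d0 : U 0 0 * U 0 0 + U 0 1 * U 0 1 + U 0 2 * U 0 2 = 1 := by
      have h := hU1e 0 0; rwa [if_pos rfl] at h
    have d1 : U 1 0 * U 1 0 + U 1 1 * U 1 1 + U 1 2 * U 1 2 = 1 := by
      have h := hU1e 1 1; rwa [if_pos rfl] at h
    have d2 : U 2 0 * U 2 0 + U 2 1 * U 2 1 + U 2 2 * U 2 2 = 1 := by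
      have h := hU1e 2 2; rwa [if_pos rfl] at h
    have o01 : U 0 0 * U 1 0 + U 0 1 * U 1 1 + U 0 2 * U 1 2 = 0 := by
      have h := hU1e 0 1; rwa [if_neg (by decide : ¬((0:Fin 3) = 1))] at h
    have o10 : U 1 0 * U 0 0 + U 1 1 * U 0 1 + U 1 2 * U 0 2 = 0 := by
      have h := hU1e 1 0; rwa [if_neg (by decide : ¬((1:Fin 3) = 0))] at h
    have o02 : U 0 0 * U 2 0 + U 0 1 * U 2 1 + U 0 2 * U 2 2 = 0 := by
      have h := hU1e 0 2; rwa [if_neg (by decide : ¬((0:Fin 3) = 2))] at h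
    have o20 : U 2 0 * U 0 0 + U 2 1 * U 0 1 + U 2 2 * U 0 2 = 0 := by
      have h := hU1e 2 0; rwa [if_neg (by decide : ¬((2:Fin 3) = 0))] at h
    have o12 : U 1 0 * U 2 0 + U 1 1 * U 2 1 + U 1 2 * U 2 2 = 0 := by
      have h := hU1e 1 2; rwa [if_neg (by decide : ¬((1:Fin 3) = 2))] at h
    have o21 : U 2 0 * U 1 0 + U 2 1 * U 1 1 + U 2 2 * U 1 2 = 0 := by
      have h := hU1e 2 1; rwa [if_neg (by decide : ¬((2:Fin 3) = 1))] at h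
    simp only [hqk', Fin.sum_univ_three]
    linear_combination Q 0 0 * d0 + Q 1 1 * d1 + Q 2 2 * d2 + Q 0 1 * o01 + Q 1 0 * o10
      + Q 0 2 * o02 + Q 2 0 * o20 + Q 1 2 * o12 + Q 2 1 * o21 + htrQ'
  have hqt : ∀ k, δ ≤ q k + 1/3 := fun k => by linarith [(hql k).1]
  have heq : ∑ k, (β kM - β k) * (q k + 1/3) = β kM - ∑ k, β k * q k := by
    simp only [Fin.sum_univ_three]
    linear_combination β kM * hqsum - (1/3) * hβsum
  have hdrop : (β kM - β km) * (q km + 1/3) ≤ ∑ k, (β kM - β k) * (q k + 1/3) :=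
    Finset.single_le_sum (f := fun k => (β kM - β k) * (q k + 1/3))
      (fun k _ => mul_nonneg (by linarith [hkM' k]) (by linarith [hqt k])) (Finset.mem_univ km)
  have hlow : (β kM - β km) * δ ≤ (β kM - β km) * (q km + 1/3) :=
    mul_le_mul_of_nonneg_left (hqt km) (by linarith [hkM' km])
  have hPb : (∑ i, ∑ j, B i j * Q i j) ≤ β kM - (β kM - β km) * δ := by
    rw [hP]
    linarith
  -- measure of the cap
  set s : Set (Metric.sphere (0 : EuclideanSpace ℝ (Fin 3)) 1) :=
    {m | ‖(m : EuclideanSpace ℝ (Fin 3)) - v‖ < r} with hsdef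
  have hmeas : MeasurableSet s := by
    have ho : IsOpen s := by
      have hc : Continuous fun m : Metric.sphere (0 : EuclideanSpace ℝ (Fin 3)) 1
          => ‖(m : EuclideanSpace ℝ (Fin 3)) - v‖ :=
        (continuous_subtype_val.sub continuous_const).norm
      exact isOpen_lt hc continuous_const
    exact ho.measurableSet
  have hμ : c ≤ (sphereMeasure s).toReal := by
    have h1 := BM.cap_measure_lb hr0 hr1 v hv
    have h2 : volume (Metric.ball ((2:ℝ)⁻¹ • v) (r/5))
        = volume (Metric.ball ((0 : EuclideanSpace ℝ (Fin 3))) (r/5)) :=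
      Measure.addHaar_ball_center volume _ _
    rw [hcdef, ← h2]
    exact ENNReal.toReal_mono (measure_ne_top _ _) h1
  have hInt : Real.exp (β kM - (β kM - β km) * δ) * c
      ≤ ∫ m : Metric.sphere (0 : EuclideanSpace ℝ (Fin 3)) 1,
        Real.exp (quadForm B m) ∂sphereMeasure := by
    refine le_trans ?_ (BM.integral_exp_quad_lb B hmeas (fun m hm => hcap m hm))
    exact mul_le_mul_of_nonneg_left hμ (Real.exp_pos _).le
  have homega : β kM - (β kM - β km) * δ + Real.log c ≤ omegaFn B := by
    have h0 : (0:ℝ) < Real.exp (β kM - (β kM - β km) * δ) * c := by positivity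
    have h := Real.log_le_log h0 hInt
    rwa [Real.log_mul (Real.exp_ne_zero _) (ne_of_gt hcpos), Real.log_exp] at h
  linarith
end

section
/- If Q is a symmetric traceless 3×3 matrix whose smallest eigenvalue q₁ satisfies q₁ ≤ −1/3, then the supremum over symmetric traceless B of B:Q − log∫_{S²} e^{m·Bm} dm is +∞. -/
open MeasureTheory

open Filter Real Set Pointwise in
lemma sphere_null_circle (v : EuclideanSpace ℝ (Fin 3)) (hv : v ≠ 0) :
    sphereMeasure {m : Metric.sphere (0 : EuclideanSpace ℝ (Fin 3)) 1 |
      (inner ℝ v (m : EuclideanSpace ℝ (Fin 3)) : ℝ) = 0} = 0 := by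
  set s := {m : Metric.sphere (0 : EuclideanSpace ℝ (Fin 3)) 1 |
      (inner ℝ v (m : EuclideanSpace ℝ (Fin 3)) : ℝ) = 0} with hsdef
  have hcont : Continuous fun m : Metric.sphere (0 : EuclideanSpace ℝ (Fin 3)) 1 =>
      (inner ℝ v (m : EuclideanSpace ℝ (Fin 3)) : ℝ) :=
    Continuous.inner continuous_const continuous_subtype_val
  have hs : MeasurableSet s := (isClosed_singleton.preimage hcont).measurableSet
  rw [sphereMeasure, Measure.toSphere_apply' _ hs]
  have h0 : volume (Set.Ioo (0:ℝ) 1 • (Subtype.val '' s)) = 0 := by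
    refine measure_mono_null ?_
      (Measure.addHaar_submodule _ ((Submodule.span ℝ {v})ᗮ) ?_)
    · rintro x hx
      rw [Set.mem_smul] at hx
      obtain ⟨r, y, hr, ⟨m, hm, rfl⟩, rfl⟩ := hx
      refine Submodule.mem_orthogonal_singleton_iff_inner_right.mpr ?_
      rw [real_inner_smul_right, hm, mul_zero]
    · intro h
      have hvmem : v ∈ (Submodule.span ℝ {v})ᗮ := h ▸ Submodule.mem_top
      have := Submodule.mem_orthogonal_singleton_iff_inner_right.mp hvmem
      exact hv (inner_self_eq_zero.mp this)
  rw [h0, mul_zero]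

open Filter in
lemma tendsto_gauss (v : EuclideanSpace ℝ (Fin 3)) (hv : v ≠ 0) :
    Tendsto (fun n : ℕ => ∫ m : Metric.sphere (0 : EuclideanSpace ℝ (Fin 3)) 1,
      Real.exp (-(3 * (n : ℝ)) * (inner ℝ v (m : EuclideanSpace ℝ (Fin 3)) : ℝ) ^ 2)
      ∂sphereMeasure) atTop (nhds 0) := by
  haveI : IsFiniteMeasure sphereMeasure := by unfold sphereMeasure; infer_instance
  have hcont : Continuous fun m : Metric.sphere (0 : EuclideanSpace ℝ (Fin 3)) 1 =>
      (inner ℝ v (m : EuclideanSpace ℝ (Fin 3)) : ℝ) :=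
    Continuous.inner continuous_const continuous_subtype_val
  have key := tendsto_integral_of_dominated_convergence (μ := sphereMeasure)
      (F := fun (n : ℕ) m => Real.exp (-(3 * (n : ℝ))
        * (inner ℝ v (m : EuclideanSpace ℝ (Fin 3)) : ℝ) ^ 2))
      (f := fun _ => (0 : ℝ)) (fun _ => (1 : ℝ))
      (fun n => Continuous.aestronglyMeasurable (Real.continuous_exp.comp
        (continuous_const.mul (hcont.pow 2))))
      (integrable_const 1)
      (fun n => ae_of_all _ fun m => by
        rw [Real.norm_eq_abs, abs_of_pos (Real.exp_pos _)]
        have h1 : (0:ℝ) ≤ 3 * (n:ℝ) * (inner ℝ v (m : EuclideanSpace ℝ (Fin 3)) : ℝ) ^ 2 := by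
          positivity
        exact (Real.exp_le_exp.mpr (by nlinarith)).trans_eq Real.exp_zero)
      ?_
  · simpa using key
  · have hae : ∀ᵐ (m : Metric.sphere (0 : EuclideanSpace ℝ (Fin 3)) 1) ∂sphereMeasure,
        (inner ℝ v (m : EuclideanSpace ℝ (Fin 3)) : ℝ) ≠ 0 := by
      refine ae_iff.mpr ?_
      have hset : {m : Metric.sphere (0 : EuclideanSpace ℝ (Fin 3)) 1 |
          ¬ (inner ℝ v (m : EuclideanSpace ℝ (Fin 3)) : ℝ) ≠ 0}
          = {m : Metric.sphere (0 : EuclideanSpace ℝ (Fin 3)) 1 |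
          (inner ℝ v (m : EuclideanSpace ℝ (Fin 3)) : ℝ) = 0} := by
        ext a; simp
      rw [hset]
      exact sphere_null_circle v hv
    filter_upwards [hae] with m hm
    have ht : (0:ℝ) < (inner ℝ v (m : EuclideanSpace ℝ (Fin 3)) : ℝ) ^ 2 :=
      pow_pos (abs_pos.mpr hm) 2 |>.trans_eq (by rw [sq_abs]) |>.trans_le le_rfl
    have hrw : ∀ n : ℕ, Real.exp (-(3 * (n : ℝ))
        * (inner ℝ v (m : EuclideanSpace ℝ (Fin 3)) : ℝ) ^ 2)
        = (Real.exp (-(3 * (inner ℝ v (m : EuclideanSpace ℝ (Fin 3)) : ℝ) ^ 2))) ^ n := by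
      intro n
      rw [← Real.exp_nat_mul]
      congr 1
      ring
    simp only [hrw]
    apply tendsto_pow_atTop_nhds_zero_of_lt_one (Real.exp_nonneg _)
    exact (Real.exp_lt_exp.mpr (by nlinarith)).trans_eq Real.exp_zero

/-- If `Q` is symmetric traceless with some eigenvalue `≤ -1/3`, then
`sup_B (B:Q − ω(B))` over symmetric traceless `B` is `+∞`. -/
theorem sup_legendre_infinite (Q : Matrix (Fin 3) (Fin 3) ℝ)
    (hQ : Q.IsHermitian) (htr : Q.trace = 0)
    (heig : ∃ i, hQ.eigenvalues i ≤ -(1 / 3)) :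
    ∀ C : ℝ, ∃ B : Matrix (Fin 3) (Fin 3) ℝ, B.IsSymm ∧ B.trace = 0 ∧
      C < (∑ i, ∑ j, B i j * Q i j) - omegaFn B := by
  classical
  obtain ⟨i, hqle⟩ := heig
  intro C
  haveI hfin : IsFiniteMeasure sphereMeasure := by unfold sphereMeasure; infer_instance
  set v : EuclideanSpace ℝ (Fin 3) := hQ.eigenvectorBasis i with hvdef
  set q : ℝ := hQ.eigenvalues i with hqdef
  have hvnorm : ‖v‖ = 1 := hQ.eigenvectorBasis.orthonormal.1 i
  have hv0 : v ≠ 0 := by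
    intro h; rw [h, norm_zero] at hvnorm; norm_num at hvnorm
  have hvv : v 0 * v 0 + v 1 * v 1 + v 2 * v 2 = 1 := by
    have h := real_inner_self_eq_norm_sq v
    rw [hvnorm] at h
    simp only [PiLp.inner_apply, RCLike.inner_apply, conj_trivial, Fin.sum_univ_three] at h
    linear_combination h
  have heq : ∀ k, Q k 0 * v 0 + Q k 1 * v 1 + Q k 2 * v 2 = q * v k := by
    intro k
    have h := congrFun (hQ.mulVec_eigenvectorBasis i) k
    simpa [Matrix.mulVec, dotProduct, Fin.sum_univ_three, hvdef, hqdef] using h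
  have htr' : Q 0 0 + Q 1 1 + Q 2 2 = 0 := by
    simpa [Matrix.trace, Matrix.diag, Fin.sum_univ_three] using htr
  have hcont : Continuous fun m : Metric.sphere (0 : EuclideanSpace ℝ (Fin 3)) 1 =>
      (inner ℝ v (m : EuclideanSpace ℝ (Fin 3)) : ℝ) :=
    Continuous.inner continuous_const continuous_subtype_val
  -- choose n
  have hev1 : ∀ᶠ n : ℕ in Filter.atTop,
      (∫ m : Metric.sphere (0 : EuclideanSpace ℝ (Fin 3)) 1,
        Real.exp (-(3 * (n : ℝ)) * (inner ℝ v (m : EuclideanSpace ℝ (Fin 3)) : ℝ) ^ 2)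
        ∂sphereMeasure) < Real.exp (-C - 1) :=
    (tendsto_gauss v hv0).eventually_lt_const (Real.exp_pos _)
  have hev2 : ∀ᶠ n : ℕ in Filter.atTop, C < (n : ℝ) :=
    (tendsto_natCast_atTop_atTop (R := ℝ)).eventually_gt_atTop C
  obtain ⟨n, hn1, hn2⟩ := (hev1.and hev2).exists
  set I : ℝ := ∫ m : Metric.sphere (0 : EuclideanSpace ℝ (Fin 3)) 1,
      Real.exp (-(3 * (n : ℝ)) * (inner ℝ v (m : EuclideanSpace ℝ (Fin 3)) : ℝ) ^ 2)
      ∂sphereMeasure with hIdef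
  set B : Matrix (Fin 3) (Fin 3) ℝ :=
    Matrix.of fun k l => (-(n:ℝ)) * (3 * v k * v l - if k = l then 1 else 0) with hBdef
  have hBsymm : B.IsSymm := by
    ext k l
    simp only [hBdef, Matrix.transpose_apply, Matrix.of_apply]
    have : (if l = k then (1:ℝ) else 0) = if k = l then 1 else 0 := by
      simp [eq_comm]
    rw [this]; ring
  have hBtr : B.trace = 0 := by
    simp only [hBdef, Matrix.trace, Matrix.diag, Fin.sum_univ_three, Matrix.of_apply]
    simp
    linear_combination (-(n:ℝ)) * 3 * hvv
  have hS : (∑ k, ∑ l, B k l * Q k l) = -(3 * (n:ℝ)) * q := by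
    simp only [hBdef, Fin.sum_univ_three, Matrix.of_apply]
    simp
    linear_combination (-(n:ℝ)) * 3 * v 0 * heq 0 + (-(n:ℝ)) * 3 * v 1 * heq 1
      + (-(n:ℝ)) * 3 * v 2 * heq 2 + (-(3 * (n:ℝ))) * q * hvv + (n:ℝ) * htr'
  set S : ℝ := ∑ k, ∑ l, B k l * Q k l with hSdef
  have hSn : (n : ℝ) ≤ S := by
    rw [hS]; nlinarith [hqle]
  refine ⟨B, hBsymm, hBtr, ?_⟩
  -- pointwise bound
  have hpt : ∀ m : Metric.sphere (0 : EuclideanSpace ℝ (Fin 3)) 1,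
      Real.exp (quadForm B (m : EuclideanSpace ℝ (Fin 3)))
        ≤ Real.exp S * Real.exp (-(3 * (n : ℝ))
            * (inner ℝ v (m : EuclideanSpace ℝ (Fin 3)) : ℝ) ^ 2) := by
    intro m
    rw [← Real.exp_add]
    apply Real.exp_le_exp.mpr
    have hmsum : (m : EuclideanSpace ℝ (Fin 3)) 0 * (m : EuclideanSpace ℝ (Fin 3)) 0
        + (m : EuclideanSpace ℝ (Fin 3)) 1 * (m : EuclideanSpace ℝ (Fin 3)) 1
        + (m : EuclideanSpace ℝ (Fin 3)) 2 * (m : EuclideanSpace ℝ (Fin 3)) 2 = 1 := by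
      have hm1 : ‖(m : EuclideanSpace ℝ (Fin 3))‖ = 1 :=
        mem_sphere_zero_iff_norm.mp m.2
      have h := real_inner_self_eq_norm_sq (m : EuclideanSpace ℝ (Fin 3))
      rw [hm1] at h
      simp only [PiLp.inner_apply, RCLike.inner_apply, conj_trivial, Fin.sum_univ_three] at h
      linear_combination h
    have hinner : (inner ℝ v (m : EuclideanSpace ℝ (Fin 3)) : ℝ)
        = v 0 * (m : EuclideanSpace ℝ (Fin 3)) 0 + v 1 * (m : EuclideanSpace ℝ (Fin 3)) 1
          + v 2 * (m : EuclideanSpace ℝ (Fin 3)) 2 := by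
      simp only [PiLp.inner_apply, RCLike.inner_apply, conj_trivial, Fin.sum_univ_three]
      ring
    have hquad : quadForm B (m : EuclideanSpace ℝ (Fin 3))
        = (-(n:ℝ)) * (3 * (inner ℝ v (m : EuclideanSpace ℝ (Fin 3)) : ℝ) ^ 2 - 1) := by
      simp only [quadForm, hBdef, Fin.sum_univ_three, Matrix.of_apply, hinner]
      simp
      linear_combination ((n:ℝ)) * hmsum
    rw [hquad]
    nlinarith [hSn, sq_nonneg (inner ℝ v (m : EuclideanSpace ℝ (Fin 3)) : ℝ),
      (n.cast_nonneg : (0:ℝ) ≤ (n:ℝ))]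
  -- integral bound
  set Int : ℝ := ∫ m : Metric.sphere (0 : EuclideanSpace ℝ (Fin 3)) 1,
      Real.exp (quadForm B (m : EuclideanSpace ℝ (Fin 3))) ∂sphereMeasure with hIntdef
  have hgint : Integrable (fun m : Metric.sphere (0 : EuclideanSpace ℝ (Fin 3)) 1 =>
      Real.exp S * Real.exp (-(3 * (n : ℝ))
        * (inner ℝ v (m : EuclideanSpace ℝ (Fin 3)) : ℝ) ^ 2)) sphereMeasure := by
    have hc : Continuous fun m : Metric.sphere (0 : EuclideanSpace ℝ (Fin 3)) 1 =>
        Real.exp S * Real.exp (-(3 * (n : ℝ))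
          * (inner ℝ v (m : EuclideanSpace ℝ (Fin 3)) : ℝ) ^ 2) :=
      continuous_const.mul (Real.continuous_exp.comp (continuous_const.mul (hcont.pow 2)))
    exact hc.integrable_of_hasCompactSupport (isClosed_tsupport _).isCompact
  have hInt_le : Int ≤ Real.exp S * I := by
    have h := integral_mono_of_nonneg (μ := sphereMeasure)
        (f := fun m : Metric.sphere (0 : EuclideanSpace ℝ (Fin 3)) 1 =>
          Real.exp (quadForm B (m : EuclideanSpace ℝ (Fin 3))))
        (ae_of_all _ fun m => (Real.exp_pos _).le) hgint (ae_of_all _ hpt)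
    rw [integral_const_mul] at h
    exact h
  have hInt_nonneg : 0 ≤ Int :=
    integral_nonneg fun m => (Real.exp_pos _).le
  have hIpos : Int < Real.exp (S - C - 1) := by
    calc Int ≤ Real.exp S * I := hInt_le
      _ < Real.exp S * Real.exp (-C - 1) := by
          apply mul_lt_mul_of_pos_left hn1 (Real.exp_pos _)
      _ = Real.exp (S - C - 1) := by rw [← Real.exp_add]; ring_nf
  have homega : omegaFn B = Real.log Int := rfl
  rw [homega]
  rcases eq_or_lt_of_le hInt_nonneg with h0 | hpos
  · rw [← h0, Real.log_zero]
    have : C < (n : ℝ) := hn2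
    linarith [hSn]
  · have hlog : Real.log Int < S - C - 1 := (Real.log_lt_iff_lt_exp hpos).mpr hIpos
    linarith
end

section
/- For any symmetric traceless 3×3 matrix B, the Jacobian of the map B ↦ Q(B) = ∫_{S²}(mm − I/3) f_B dm, where f_B = e^{m·Bm}/∫ e^{m'·Bm'} dm', is positive definite on the space of symmetric traceless matrices: for every nonzero symmetric traceless E, ⟨∇_B Q(B) E, E⟩ = ∫_{S²}(mm:E)² f_B dm − (∫_{S²}(mm:E) f_B dm)² > 0. -/
open MeasureTheory

/-- The Bingham probability density on the sphere associated with `B`. -/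
noncomputable def binghamDensity (B : Matrix (Fin 3) (Fin 3) ℝ)
    (m : EuclideanSpace ℝ (Fin 3)) : ℝ :=
  Real.exp (quadForm B m) /
    ∫ m' : Metric.sphere (0 : EuclideanSpace ℝ (Fin 3)) 1,
      Real.exp (quadForm B m') ∂sphereMeasure

lemma quadForm_continuous (B : Matrix (Fin 3) (Fin 3) ℝ) : Continuous (quadForm B) := by
  unfold quadForm; fun_prop

lemma integrable_sphere {f : Metric.sphere (0 : EuclideanSpace ℝ (Fin 3)) 1 → ℝ}
    (hf : Continuous f) : Integrable f sphereMeasure := by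
  have : IsFiniteMeasure sphereMeasure := by unfold sphereMeasure; infer_instance
  exact hf.integrable_of_hasCompactSupport (isClosed_tsupport _).isCompact

open Set in
lemma sphereMeasure_open_pos {U : Set (Metric.sphere (0 : EuclideanSpace ℝ (Fin 3)) 1)}
    (hU : IsOpen U) (hne : U.Nonempty) : 0 < sphereMeasure U := by
  set E' := EuclideanSpace ℝ (Fin 3)
  by_contra h
  push_neg at h
  have h0 : sphereMeasure U = 0 := le_antisymm h zero_le
  have mp := (volume : Measure E').measurePreserving_homeomorphUnitSphereProd
  set T : Set ({(0:E')}ᶜ : Set E') := homeomorphUnitSphereProd E' ⁻¹' (U ×ˢ univ) with hT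
  have hmeas : MeasurableSet (U ×ˢ (univ : Set (Ioi (0:ℝ)))) :=
    hU.measurableSet.prod MeasurableSet.univ
  have h1 : (volume.comap Subtype.val) T = 0 := by
    rw [mp.measure_preimage hmeas.nullMeasurableSet, Measure.prod_prod]
    rw [show (volume : Measure E').toSphere U = 0 from h0]
    simp
  have hTopen : IsOpen T := (homeomorphUnitSphereProd E').continuous.isOpen_preimage _
    (hU.prod isOpen_univ)
  have h2 : (volume.comap Subtype.val) T = volume (Subtype.val '' T) :=
    comap_subtype_coe_apply (measurableSet_singleton (0:E')).compl _ _
  have himopen : IsOpen (Subtype.val '' T) :=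
    (isClosed_singleton (x := (0:E'))).isOpen_compl.isOpenMap_subtype_val T hTopen
  obtain ⟨x₀, hx₀⟩ := hne
  have hpt : (homeomorphUnitSphereProd E').symm (x₀, ⟨(1:ℝ)/2, by norm_num⟩) ∈ T := by
    simp only [hT, Set.mem_preimage, Homeomorph.apply_symm_apply]
    exact ⟨hx₀, Set.mem_univ _⟩
  have hnem : (Subtype.val '' T).Nonempty := ⟨_, Set.mem_image_of_mem _ hpt⟩
  have := himopen.measure_pos (volume : Measure E') hnem
  rw [← h2, h1] at this
  exact lt_irrefl _ this

lemma integral_pos_sphere {h : Metric.sphere (0 : EuclideanSpace ℝ (Fin 3)) 1 → ℝ}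
    (hc : Continuous h) (hnn : ∀ x, 0 ≤ h x)
    (x₀ : Metric.sphere (0 : EuclideanSpace ℝ (Fin 3)) 1) (hx₀ : h x₀ ≠ 0) :
    0 < ∫ x, h x ∂sphereMeasure := by
  rw [integral_pos_iff_support_of_nonneg hnn (integrable_sphere hc)]
  exact sphereMeasure_open_pos hc.isOpen_support ⟨x₀, hx₀⟩

lemma sphere_pt : EuclideanSpace.single (0 : Fin 3) (1:ℝ) ∈
    Metric.sphere (0 : EuclideanSpace ℝ (Fin 3)) 1 := by
  simp [mem_sphere_iff_norm, EuclideanSpace.norm_single]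

lemma Z_pos (B : Matrix (Fin 3) (Fin 3) ℝ) :
    0 < ∫ m' : Metric.sphere (0 : EuclideanSpace ℝ (Fin 3)) 1,
      Real.exp (quadForm B m') ∂sphereMeasure := by
  refine integral_pos_sphere
    (Real.continuous_exp.comp ((quadForm_continuous B).comp continuous_subtype_val))
    (fun x => (Real.exp_pos _).le) ⟨_, sphere_pt⟩ (Real.exp_pos _).ne'

lemma quadForm_single (E : Matrix (Fin 3) (Fin 3) ℝ) (i : Fin 3) :
    quadForm E (EuclideanSpace.single i 1) = E i i := by
  simp [quadForm, EuclideanSpace.single_apply, mul_ite, ite_mul, Finset.sum_ite_eq']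

lemma quadForm_smul (E : Matrix (Fin 3) (Fin 3) ℝ) (c : ℝ) (m : EuclideanSpace ℝ (Fin 3)) :
    quadForm E (c • m) = c^2 * quadForm E m := by
  simp only [quadForm, PiLp.smul_apply, smul_eq_mul, Finset.mul_sum]
  congr 1; ext k; congr 1; ext l; ring

lemma quadForm_pair (E : Matrix (Fin 3) (Fin 3) ℝ) {i j : Fin 3} (_hij : i ≠ j) :
    quadForm E (EuclideanSpace.single i 1 + EuclideanSpace.single j 1)
      = E i i + E i j + E j i + E j j := by
  simp only [quadForm, PiLp.add_apply, EuclideanSpace.single_apply]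
  rw [Finset.sum_comm]
  simp [mul_add, add_mul, mul_ite, ite_mul, Finset.sum_add_distrib, Finset.sum_ite_eq',
    _hij, _hij.symm]
  ring

lemma pair_mem_sphere {i j : Fin 3} (hij : i ≠ j) :
    (Real.sqrt 2 / 2) • (EuclideanSpace.single i (1:ℝ) + EuclideanSpace.single j 1) ∈
      Metric.sphere (0 : EuclideanSpace ℝ (Fin 3)) 1 := by
  rw [mem_sphere_zero_iff_norm, norm_smul]
  have h2 : ‖EuclideanSpace.single i (1:ℝ) + EuclideanSpace.single j 1‖ = Real.sqrt 2 := by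
    rw [EuclideanSpace.norm_eq]
    have key : ∀ k : Fin 3, ‖((EuclideanSpace.single i (1:ℝ) + EuclideanSpace.single j 1 :
        EuclideanSpace ℝ (Fin 3))) k‖^2 = (if k = i then (1:ℝ) else 0) + (if k = j then 1 else 0) := by
      intro k
      simp only [PiLp.add_apply, EuclideanSpace.single_apply, Real.norm_eq_abs, sq_abs]
      rcases eq_or_ne k i with rfl|h <;> rcases eq_or_ne k j with rfl|h' <;> simp_all
    rw [Finset.sum_congr rfl fun k _ => key k]
    rw [Finset.sum_add_distrib]
    simp [Finset.sum_ite_eq']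
    norm_num
  rw [h2]
  rw [Real.norm_eq_abs, abs_of_nonneg (by positivity)]
  rw [div_mul_eq_mul_div, Real.mul_self_sqrt (by norm_num)]
  norm_num

lemma eq_zero_of_quadForm_const (E : Matrix (Fin 3) (Fin 3) ℝ)
    (hE : E.IsSymm) (hEtr : E.trace = 0) (a : ℝ)
    (h : ∀ x : Metric.sphere (0 : EuclideanSpace ℝ (Fin 3)) 1, quadForm E x = a) :
    E = 0 := by
  have hdiag : ∀ i, E i i = a := by
    intro i
    have hm := h ⟨EuclideanSpace.single i 1, by
      simp [mem_sphere_zero_iff_norm, EuclideanSpace.norm_single]⟩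
    simpa [quadForm_single] using hm
  have ha : a = 0 := by
    rw [Matrix.trace_fin_three] at hEtr
    linarith [hdiag 0, hdiag 1, hdiag 2]
  have hoff : ∀ i j, i ≠ j → E i j = 0 := by
    intro i j hij
    have hm := h ⟨_, pair_mem_sphere hij⟩
    rw [quadForm_smul, quadForm_pair E hij] at hm
    have hs : (Real.sqrt 2 / 2)^2 = 1/2 := by
      rw [div_pow, Real.sq_sqrt] <;> norm_num
    have hsym : E j i = E i j := hE.apply i j
    rw [hs, hdiag i, hdiag j, hsym, ha] at hm
    linarith
  ext i j
  rcases eq_or_ne i j with rfl | hij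
  · simp [hdiag i, ha]
  · simp [hoff i j hij]

/-- The Jacobian of `B ↦ Q(B)` is positive definite: for nonzero symmetric traceless
`E`, the variance `∫(mm:E)² f_B − (∫(mm:E) f_B)²` is strictly positive. -/
theorem jacobian_pos_def (B E : Matrix (Fin 3) (Fin 3) ℝ)
    (hB : B.IsSymm) (hBtr : B.trace = 0)
    (hE : E.IsSymm) (hEtr : E.trace = 0) (hE0 : E ≠ 0) :
    0 < (∫ m : Metric.sphere (0 : EuclideanSpace ℝ (Fin 3)) 1,
          (quadForm E m) ^ 2 * binghamDensity B m ∂sphereMeasure) -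
        (∫ m : Metric.sphere (0 : EuclideanSpace ℝ (Fin 3)) 1,
          quadForm E m * binghamDensity B m ∂sphereMeasure) ^ 2 := by
  set Sph := Metric.sphere (0 : EuclideanSpace ℝ (Fin 3)) 1
  set f : Sph → ℝ := fun m => binghamDensity B m with hf
  set g : Sph → ℝ := fun m => quadForm E m with hg
  have hZ := Z_pos B
  have hfc : Continuous f := by
    simp only [hf, binghamDensity]
    exact (Real.continuous_exp.comp ((quadForm_continuous B).comp continuous_subtype_val)).div_const _
  have hgc : Continuous g := (quadForm_continuous E).comp continuous_subtype_val
  have hfpos : ∀ m, 0 < f m := fun m => div_pos (Real.exp_pos _) hZ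
  have hint_f : ∫ m, f m ∂sphereMeasure = 1 := by
    simp only [hf, binghamDensity]
    rw [integral_div]
    exact div_self hZ.ne'
  set a : ℝ := ∫ m, g m * f m ∂sphereMeasure with haa
  have I0 : Integrable f sphereMeasure := integrable_sphere hfc
  have I1 : Integrable (fun m => g m * f m) sphereMeasure := integrable_sphere (hgc.mul hfc)
  have I2 : Integrable (fun m => g m ^ 2 * f m) sphereMeasure :=
    integrable_sphere ((hgc.pow 2).mul hfc)
  -- expansion of the variance
  have key : ∫ m, (g m - a)^2 * f m ∂sphereMeasure
      = (∫ m, g m ^ 2 * f m ∂sphereMeasure) - a ^ 2 := by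
    have hfun : (fun m => (g m - a)^2 * f m)
        = fun m => (g m ^ 2 * f m) - (2*a) * (g m * f m) + (a^2) * f m := by
      funext m; ring
    have Isub : Integrable (fun m => g m ^ 2 * f m - 2 * a * (g m * f m)) sphereMeasure :=
      I2.sub (I1.const_mul _)
    have Icm : Integrable (fun m => a ^ 2 * f m) sphereMeasure := I0.const_mul _
    rw [hfun, integral_add Isub Icm, integral_sub I2 (I1.const_mul _),
      integral_const_mul, integral_const_mul, hint_f, ← haa]
    ring
  -- the function `g` is not constantly `a`
  have hx : ∃ x : Sph, g x ≠ a := by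
    by_contra hc
    push_neg at hc
    exact hE0 (eq_zero_of_quadForm_const E hE hEtr a hc)
  obtain ⟨x₀, hx₀⟩ := hx
  have hpos : 0 < ∫ m, (g m - a)^2 * f m ∂sphereMeasure := by
    refine integral_pos_sphere (((hgc.sub continuous_const).pow 2).mul hfc)
      (fun x => mul_nonneg (sq_nonneg _) (hfpos x).le) x₀ ?_
    exact mul_ne_zero (pow_ne_zero 2 (sub_ne_zero.mpr hx₀)) (hfpos x₀).ne'
  rw [key] at hpos
  exact hpos
end

section
/- Let Q̄ ∈ Q_phy and define Q_{Q̄}(B) = M_{Q̄}^{(4)}:B − (I/3 + Q̄)(Q̄:B) for symmetric traceless B, where M_{Q̄}^{(4)} = ∫_{S²} mmmm f_{Q̄} dm is the fourth moment of the Bingham distribution with second moment Q̄. Then Q_{Q̄} is self-adjoint on symmetric traceless matrices: Q_{Q̄}(B₁):B₂ = Q_{Q̄}(B₂):B₁, and positive semidefinite: Q_{Q̄}(B):B ≥ 0. -/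
open MeasureTheory

/-- Fourth moment `M^{(4)}_{ijkl} = ∫ m_i m_j m_k m_l f_B dm` of the Bingham
distribution with field `B`. -/
noncomputable def M4 (B : Matrix (Fin 3) (Fin 3) ℝ) (i j k l : Fin 3) : ℝ :=
  ∫ m : Metric.sphere (0 : EuclideanSpace ℝ (Fin 3)) 1,
    (m : EuclideanSpace ℝ (Fin 3)) i * (m : EuclideanSpace ℝ (Fin 3)) j *
    (m : EuclideanSpace ℝ (Fin 3)) k * (m : EuclideanSpace ℝ (Fin 3)) l *
    binghamDensity B m ∂sphereMeasure

/-- Frobenius inner product of 3×3 matrices. -/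
def frob (A B : Matrix (Fin 3) (Fin 3) ℝ) : ℝ := ∑ i, ∑ j, A i j * B i j

/-- The operator `Q_{Q̄}(B) = M^{(4)}:B − (I/3 + Q̄)(Q̄:B)`. -/
noncomputable def calQ (Qbar Bbar B : Matrix (Fin 3) (Fin 3) ℝ) :
    Matrix (Fin 3) (Fin 3) ℝ :=
  Matrix.of fun i j =>
    (∑ k, ∑ l, M4 Bbar i j k l * B k l) -
      ((if i = j then (1 : ℝ) / 3 else 0) + Qbar i j) * frob Qbar B

section Aux

local notation "S" => Metric.sphere (0 : EuclideanSpace ℝ (Fin 3)) 1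

instance inst_s7 : IsFiniteMeasure sphereMeasure := by
  unfold sphereMeasure; infer_instance

lemma contCoord (i : Fin 3) :
    Continuous fun m : S => (m : EuclideanSpace ℝ (Fin 3)) i :=
  (EuclideanSpace.proj i).continuous.comp continuous_subtype_val

lemma contQuad (B : Matrix (Fin 3) (Fin 3) ℝ) :
    Continuous fun m : S => quadForm B (m : EuclideanSpace ℝ (Fin 3)) := by
  unfold quadForm
  exact continuous_finset_sum _ fun i _ => continuous_finset_sum _ fun j _ =>
    (continuous_const.mul (contCoord i)).mul (contCoord j)

lemma contDensity (B : Matrix (Fin 3) (Fin 3) ℝ) :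
    Continuous fun m : S => binghamDensity B (m : EuclideanSpace ℝ (Fin 3)) := by
  unfold binghamDensity
  exact (Real.continuous_exp.comp (contQuad B)).div_const _

lemma integrable_cont {f : S → ℝ} (hf : Continuous f) :
    Integrable f sphereMeasure :=
  hf.integrable_of_hasCompactSupport (HasCompactSupport.of_compactSpace f)

lemma swap4 (F : Fin 3 → Fin 3 → Fin 3 → Fin 3 → ℝ) :
    (∑ i, ∑ j, ∑ k, ∑ l, F i j k l) = ∑ k, ∑ l, ∑ i, ∑ j, F i j k l := by
  simp only [Fin.sum_univ_three]; ring

lemma sumint (F : Fin 3 → Fin 3 → S → ℝ) (hF : ∀ i j, Continuous (F i j)) :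
    (∑ i, ∑ j, ∫ m, F i j m ∂sphereMeasure)
      = ∫ m, ∑ i, ∑ j, F i j m ∂sphereMeasure := by
  symm
  rw [integral_finset_sum _ (fun i _ =>
    integrable_cont (continuous_finset_sum _ fun j _ => hF i j))]
  exact Finset.sum_congr rfl fun i _ =>
    integral_finset_sum _ fun j _ => integrable_cont (hF i j)

lemma sumint4 (F : Fin 3 → Fin 3 → Fin 3 → Fin 3 → S → ℝ)
    (hF : ∀ i j k l, Continuous (F i j k l)) :
    (∑ i, ∑ j, ∑ k, ∑ l, ∫ m, F i j k l m ∂sphereMeasure)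
      = ∫ m, ∑ i, ∑ j, ∑ k, ∑ l, F i j k l m ∂sphereMeasure := by
  have h1 : ∀ i j, (∑ k, ∑ l, ∫ m, F i j k l m ∂sphereMeasure)
      = ∫ m, ∑ k, ∑ l, F i j k l m ∂sphereMeasure := fun i j =>
    sumint (F i j) (hF i j)
  simp only [h1]
  exact sumint _ fun i j => continuous_finset_sum _ fun k _ =>
    continuous_finset_sum _ fun l _ => hF i j k l

end Aux

/-- For `Q̄ ∈ Q_phy` with Bingham field `B̄`, the linearized operator
`Q_{Q̄}` is self-adjoint and positive semidefinite on symmetric traceless matrices. -/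
theorem calQ_selfAdjoint_nonneg (Qbar Bbar : Matrix (Fin 3) (Fin 3) ℝ)
    (hB : Bbar.IsSymm) (hBtr : Bbar.trace = 0)
    (hQ : Qbar.IsHermitian) (hQtr : Qbar.trace = 0)
    (heig : ∀ i, hQ.eigenvalues i ∈ Set.Ioo (-(1 / 3) : ℝ) (2 / 3))
    (hmom : ∀ i j, (∫ m : Metric.sphere (0 : EuclideanSpace ℝ (Fin 3)) 1,
        ((m : EuclideanSpace ℝ (Fin 3)) i * (m : EuclideanSpace ℝ (Fin 3)) j -
          if i = j then (1 : ℝ) / 3 else 0) * binghamDensity Bbar m ∂sphereMeasure)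
        = Qbar i j) :
    ∀ B₁ B₂ : Matrix (Fin 3) (Fin 3) ℝ,
      B₁.IsSymm → B₁.trace = 0 → B₂.IsSymm → B₂.trace = 0 →
      frob (calQ Qbar Bbar B₁) B₂ = frob (calQ Qbar Bbar B₂) B₁ ∧
      0 ≤ frob (calQ Qbar Bbar B₁) B₁ := by
  intro B₁ B₂ hs1 ht1 hs2 ht2
  have htr : ∀ C : Matrix (Fin 3) (Fin 3) ℝ, C.trace = 0 →
      C 0 0 + C 1 1 + C 2 2 = 0 := by
    intro C h
    simpa [Matrix.trace, Matrix.diag, Fin.sum_univ_three] using h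
  have hM4 : ∀ i j k l, M4 Bbar i j k l = M4 Bbar k l i j := by
    intro i j k l
    unfold M4
    congr 1
    funext m
    ring
  have key : ∀ A C : Matrix (Fin 3) (Fin 3) ℝ, C 0 0 + C 1 1 + C 2 2 = 0 →
      frob (calQ Qbar Bbar A) C =
        (∑ i, ∑ j, ∑ k, ∑ l, M4 Bbar i j k l * A k l * C i j) -
          frob Qbar A * frob Qbar C := by
    intro A C hC
    simp only [frob, calQ, Matrix.of_apply, Fin.sum_univ_three, Fin.reduceEq,
      if_true, if_false, reduceIte]
    linear_combination (-(Qbar 0 0 * A 0 0 + Qbar 0 1 * A 0 1 + Qbar 0 2 * A 0 2 +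
      Qbar 1 0 * A 1 0 + Qbar 1 1 * A 1 1 + Qbar 1 2 * A 1 2 +
      Qbar 2 0 * A 2 0 + Qbar 2 1 * A 2 1 + Qbar 2 2 * A 2 2) / 3) * hC
  constructor
  · rw [key B₁ B₂ (htr B₂ ht2), key B₂ B₁ (htr B₁ ht1)]
    have hswap : (∑ i, ∑ j, ∑ k, ∑ l, M4 Bbar i j k l * B₁ k l * B₂ i j)
        = ∑ i, ∑ j, ∑ k, ∑ l, M4 Bbar i j k l * B₂ k l * B₁ i j := by
      rw [swap4]
      refine Finset.sum_congr rfl fun k _ => Finset.sum_congr rfl fun l _ =>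
        Finset.sum_congr rfl fun i _ => Finset.sum_congr rfl fun j _ => ?_
      rw [hM4 i j k l]; ring
    rw [hswap, mul_comm]
  · rw [key B₁ B₁ (htr B₁ ht1)]
    have hZnn : (0:ℝ) ≤ ∫ m' : Metric.sphere (0 : EuclideanSpace ℝ (Fin 3)) 1,
        Real.exp (quadForm Bbar m') ∂sphereMeasure :=
      integral_nonneg fun m => (Real.exp_pos _).le
    rcases hZnn.eq_or_lt with hZ0 | hZpos
    · -- degenerate case: normalization constant is zero, density vanishes
      have hdens : ∀ m : Metric.sphere (0 : EuclideanSpace ℝ (Fin 3)) 1,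
          binghamDensity Bbar m = 0 := by
        intro m
        unfold binghamDensity
        rw [← hZ0, div_zero]
      have hM40 : ∀ i j k l, M4 Bbar i j k l = 0 := by
        intro i j k l
        unfold M4
        simp only [hdens, mul_zero, integral_zero]
      have hQ0 : ∀ i j, Qbar i j = 0 := by
        intro i j
        rw [← hmom i j]
        simp only [hdens, mul_zero, integral_zero]
      simp [frob, hM40, hQ0]
    · -- nondegenerate case: the density is a probability density
      have hf_nonneg : ∀ m : Metric.sphere (0 : EuclideanSpace ℝ (Fin 3)) 1,
          0 ≤ binghamDensity Bbar m := by
        intro m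
        unfold binghamDensity
        exact div_nonneg (Real.exp_pos _).le hZpos.le
      have hf_int1 : (∫ m : Metric.sphere (0 : EuclideanSpace ℝ (Fin 3)) 1,
          binghamDensity Bbar m ∂sphereMeasure) = 1 := by
        unfold binghamDensity
        rw [integral_div, div_self hZpos.ne']
      have hggf_int : Integrable
          (fun m : Metric.sphere (0 : EuclideanSpace ℝ (Fin 3)) 1 =>
            quadForm B₁ m * quadForm B₁ m * binghamDensity Bbar m) sphereMeasure :=
        integrable_cont (((contQuad B₁).mul (contQuad B₁)).mul (contDensity Bbar))
      have hgf_int : Integrable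
          (fun m : Metric.sphere (0 : EuclideanSpace ℝ (Fin 3)) 1 =>
            quadForm B₁ m * binghamDensity Bbar m) sphereMeasure :=
        integrable_cont ((contQuad B₁).mul (contDensity Bbar))
      have hf_int : Integrable
          (fun m : Metric.sphere (0 : EuclideanSpace ℝ (Fin 3)) 1 =>
            binghamDensity Bbar m) sphereMeasure :=
        integrable_cont (contDensity Bbar)
      -- first moment of quadForm B₁ equals frob Qbar B₁
      have hc : frob Qbar B₁ = ∫ m : Metric.sphere (0 : EuclideanSpace ℝ (Fin 3)) 1,
          quadForm B₁ m * binghamDensity Bbar m ∂sphereMeasure := by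
        have e1 : ∀ i j : Fin 3, Qbar i j * B₁ i j =
            ∫ m : Metric.sphere (0 : EuclideanSpace ℝ (Fin 3)) 1,
              (((m : EuclideanSpace ℝ (Fin 3)) i * (m : EuclideanSpace ℝ (Fin 3)) j -
                if i = j then (1:ℝ)/3 else 0) * binghamDensity Bbar m) * B₁ i j
              ∂sphereMeasure := by
          intro i j
          rw [integral_mul_const, hmom]
        simp only [frob, e1]
        rw [sumint (fun i j (m : Metric.sphere (0 : EuclideanSpace ℝ (Fin 3)) 1) =>
          (((m : EuclideanSpace ℝ (Fin 3)) i * (m : EuclideanSpace ℝ (Fin 3)) j -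
            if i = j then (1:ℝ)/3 else 0) * binghamDensity Bbar m) * B₁ i j) (fun i j =>
          ((((contCoord i).mul (contCoord j)).sub continuous_const).mul
            (contDensity Bbar)).mul continuous_const)]
        congr 1
        funext m
        have hB1 : B₁ 0 0 + B₁ 1 1 + B₁ 2 2 = 0 := htr B₁ ht1
        simp only [quadForm, Fin.sum_univ_three, Fin.reduceEq, if_true, if_false,
          reduceIte]
        linear_combination (-(binghamDensity Bbar (m : EuclideanSpace ℝ (Fin 3))) / 3) * hB1
      -- second moment of quadForm B₁ equals the M4 quadruple sum
      have hA : (∑ i, ∑ j, ∑ k, ∑ l, M4 Bbar i j k l * B₁ k l * B₁ i j)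
          = ∫ m : Metric.sphere (0 : EuclideanSpace ℝ (Fin 3)) 1,
              quadForm B₁ m * quadForm B₁ m * binghamDensity Bbar m ∂sphereMeasure := by
        have e1 : ∀ i j k l : Fin 3, M4 Bbar i j k l * B₁ k l * B₁ i j =
            ∫ m : Metric.sphere (0 : EuclideanSpace ℝ (Fin 3)) 1,
              (((m : EuclideanSpace ℝ (Fin 3)) i * (m : EuclideanSpace ℝ (Fin 3)) j *
                (m : EuclideanSpace ℝ (Fin 3)) k * (m : EuclideanSpace ℝ (Fin 3)) l *
                binghamDensity Bbar m) * B₁ k l) * B₁ i j ∂sphereMeasure := by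
          intro i j k l
          unfold M4
          rw [integral_mul_const, integral_mul_const]
        simp only [e1]
        rw [sumint4 (fun i j k l (m : Metric.sphere (0 : EuclideanSpace ℝ (Fin 3)) 1) =>
          (((m : EuclideanSpace ℝ (Fin 3)) i * (m : EuclideanSpace ℝ (Fin 3)) j *
            (m : EuclideanSpace ℝ (Fin 3)) k * (m : EuclideanSpace ℝ (Fin 3)) l *
            binghamDensity Bbar m) * B₁ k l) * B₁ i j) (fun i j k l =>
          (((((((contCoord i).mul (contCoord j)).mul (contCoord k)).mul
            (contCoord l)).mul (contDensity Bbar)).mul continuous_const).mul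
            continuous_const))]
        congr 1
        funext m
        simp only [quadForm, Fin.sum_univ_three]
        ring
      -- variance is nonnegative
      have hvar : (0:ℝ) ≤ ∫ m : Metric.sphere (0 : EuclideanSpace ℝ (Fin 3)) 1,
          (quadForm B₁ m - frob Qbar B₁)^2 * binghamDensity Bbar m ∂sphereMeasure :=
        integral_nonneg fun m => mul_nonneg (sq_nonneg _) (hf_nonneg m)
      have hexp : (∫ m : Metric.sphere (0 : EuclideanSpace ℝ (Fin 3)) 1,
          (quadForm B₁ m - frob Qbar B₁)^2 * binghamDensity Bbar m ∂sphereMeasure)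
          = (∫ m : Metric.sphere (0 : EuclideanSpace ℝ (Fin 3)) 1,
              quadForm B₁ m * quadForm B₁ m * binghamDensity Bbar m ∂sphereMeasure)
            - 2 * frob Qbar B₁ * (∫ m : Metric.sphere (0 : EuclideanSpace ℝ (Fin 3)) 1,
              quadForm B₁ m * binghamDensity Bbar m ∂sphereMeasure)
            + frob Qbar B₁^2 * (∫ m : Metric.sphere (0 : EuclideanSpace ℝ (Fin 3)) 1,
              binghamDensity Bbar m ∂sphereMeasure) := by
        have e : (fun m : Metric.sphere (0 : EuclideanSpace ℝ (Fin 3)) 1 =>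
            (quadForm B₁ m - frob Qbar B₁)^2 * binghamDensity Bbar m)
            = fun m : Metric.sphere (0 : EuclideanSpace ℝ (Fin 3)) 1 =>
                (quadForm B₁ m * quadForm B₁ m * binghamDensity Bbar m
                - 2 * frob Qbar B₁ * (quadForm B₁ m * binghamDensity Bbar m))
                + frob Qbar B₁^2 * binghamDensity Bbar m := by
          funext m; ring
        have i2 : Integrable (fun m : Metric.sphere (0 : EuclideanSpace ℝ (Fin 3)) 1 =>
            2 * frob Qbar B₁ * (quadForm B₁ m * binghamDensity Bbar m)) sphereMeasure :=
          hgf_int.const_mul _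
        have i3 : Integrable (fun m : Metric.sphere (0 : EuclideanSpace ℝ (Fin 3)) 1 =>
            frob Qbar B₁^2 * binghamDensity Bbar m) sphereMeasure :=
          hf_int.const_mul _
        have i1 : Integrable (fun m : Metric.sphere (0 : EuclideanSpace ℝ (Fin 3)) 1 =>
            quadForm B₁ m * quadForm B₁ m * binghamDensity Bbar m
              - 2 * frob Qbar B₁ * (quadForm B₁ m * binghamDensity Bbar m)) sphereMeasure :=
          hggf_int.sub i2
        rw [e, integral_add i1 i3, integral_sub hggf_int i2, integral_const_mul,
          integral_const_mul]
      rw [hf_int1, ← hc] at hexp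
      rw [hA]
      nlinarith [hvar, hexp]
end

section
/- For any symmetric traceless 3×3 matrix B and any unit vector n, one has |B|² ≥ (3/2)(n·Bn)². -/
/-- For a symmetric traceless 3×3 matrix `B` and a unit vector `n`,
`|B|² ≥ (3/2)(n·Bn)²`. -/
theorem norm_sq_ge_quadform_sq (B : Matrix (Fin 3) (Fin 3) ℝ)
    (hB : B.IsSymm) (htr : B.trace = 0)
    (n : Fin 3 → ℝ) (hn : ∑ i, n i ^ 2 = 1) :
    (3 / 2 : ℝ) * (∑ i, ∑ j, n i * B i j * n j) ^ 2 ≤ ∑ i, ∑ j, (B i j) ^ 2 := by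
  have key := Finset.sum_mul_sq_le_sq_mul_sq (Finset.univ : Finset (Fin 3 × Fin 3))
    (fun p => B p.1 p.2)
    (fun p => n p.1 * n p.2 - if p.1 = p.2 then (1/3 : ℝ) else 0)
  simp only [Fintype.sum_prod_type] at key
  have htr' : B 0 0 + B 1 1 + B 2 2 = 0 := by
    simpa [Matrix.trace, Matrix.diag, Fin.sum_univ_three] using htr
  simp only [Fin.sum_univ_three] at key hn ⊢
  norm_num [Fin.ext_iff] at key
  have e1 : B 0 0 * (n 0 * n 0 - 1/3) + B 0 1 * (n 0 * n 1) + B 0 2 * (n 0 * n 2)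
      + (B 1 0 * (n 1 * n 0) + B 1 1 * (n 1 * n 1 - 1/3) + B 1 2 * (n 1 * n 2))
      + (B 2 0 * (n 2 * n 0) + B 2 1 * (n 2 * n 1) + B 2 2 * (n 2 * n 2 - 1/3))
      = n 0 * B 0 0 * n 0 + n 0 * B 0 1 * n 1 + n 0 * B 0 2 * n 2
      + (n 1 * B 1 0 * n 0 + n 1 * B 1 1 * n 1 + n 1 * B 1 2 * n 2)
      + (n 2 * B 2 0 * n 0 + n 2 * B 2 1 * n 1 + n 2 * B 2 2 * n 2) := by
    linear_combination (-(1:ℝ)/3) * htr'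
  have e2 : (n 0 * n 0 - 1/3) ^ 2 + (n 0 * n 1) ^ 2 + (n 0 * n 2) ^ 2
      + ((n 1 * n 0) ^ 2 + (n 1 * n 1 - 1/3) ^ 2 + (n 1 * n 2) ^ 2)
      + ((n 2 * n 0) ^ 2 + (n 2 * n 1) ^ 2 + (n 2 * n 2 - 1/3) ^ 2) = 2/3 := by
    linear_combination (n 0 ^ 2 + n 1 ^ 2 + n 2 ^ 2 + 1/3) * hn
  rw [e1, e2] at key
  linarith
end

section
/- Suppose real numbers β₁, β₃ satisfy β₃ > 0 and β₁ − β₃/2 > 0, and let n be a unit vector. Then for every symmetric traceless 3×3 matrix B lying in Q_n^out (i.e. B orthogonal to all matrices np + pn with p ⊥ n), the quantity (β₁ − 2β₃)(n·Bn)² + β₃|B|² is bounded below by c₀|B|² with c₀ = min{β₃, (2β₁ − β₃)/3} > 0. -/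
open Matrix

lemma key_cs (n : Fin 3 → ℝ) (hn : ∑ i, n i ^ 2 = 1)
    (B : Matrix (Fin 3) (Fin 3) ℝ) (htr : B.trace = 0) :
    3 * (∑ i, ∑ j, n i * B i j * n j) ^ 2 ≤ 2 * frob B B := by
  set M : Matrix (Fin 3) (Fin 3) ℝ :=
    fun i j => n i * n j - if i = j then 1/3 else 0 with hM
  have htr' : B 0 0 + B 1 1 + B 2 2 = 0 := by
    simpa [Matrix.trace, Fin.sum_univ_three] using htr
  have hBM : (∑ i, ∑ j, B i j * M i j) = ∑ i, ∑ j, n i * B i j * n j := by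
    simp only [hM, Fin.sum_univ_three]
    norm_num [Fin.ext_iff]
    nlinarith [htr']
  have hMM : (∑ i, ∑ j, M i j ^ 2) = 1 - 2/3 * (∑ i, n i ^ 2)
      + 3 * (1/3)^2 - (1 - (∑ i, n i ^ 2)^2) := by
    simp only [hM, Fin.sum_univ_three]
    norm_num [Fin.ext_iff]
    ring
  rw [hn] at hMM
  norm_num at hMM
  have hcs := Finset.sum_mul_sq_le_sq_mul_sq (Finset.univ ×ˢ Finset.univ)
    (fun p : Fin 3 × Fin 3 => B p.1 p.2) (fun p : Fin 3 × Fin 3 => M p.1 p.2)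
  rw [Finset.sum_product, Finset.sum_product, Finset.sum_product] at hcs
  rw [hBM] at hcs
  have hfb : frob B B = ∑ i, ∑ j, B i j ^ 2 := by
    simp [frob, sq]
  rw [hMM] at hcs
  nlinarith [hcs]

/-- If `β₃ > 0` and `β₁ − β₃/2 > 0`, then for `B` symmetric traceless in
`Q_n^out`, `(β₁ − 2β₃)(n·Bn)² + β₃|B|² ≥ c₀|B|²` with
`c₀ = min{β₃, (2β₁ − β₃)/3} > 0`. -/
theorem coercivity_on_Qout (β₁ β₃ : ℝ) (h3 : 0 < β₃) (h1 : 0 < β₁ - β₃ / 2)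
    (n : Fin 3 → ℝ) (hn : ∑ i, n i ^ 2 = 1) :
    0 < min β₃ ((2 * β₁ - β₃) / 3) ∧
    ∀ B : Matrix (Fin 3) (Fin 3) ℝ, B.IsSymm → B.trace = 0 →
      (∀ p : Fin 3 → ℝ, (∑ i, p i * n i = 0) →
        frob B (vecMulVec n p + vecMulVec p n) = 0) →
      min β₃ ((2 * β₁ - β₃) / 3) * frob B B ≤
        (β₁ - 2 * β₃) * (∑ i, ∑ j, n i * B i j * n j) ^ 2 + β₃ * frob B B := by
  constructor
  · exact lt_min h3 (by linarith)
  intro B hsym htr _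
  set s := ∑ i, ∑ j, n i * B i j * n j with hs
  have hf : 0 ≤ frob B B := by
    unfold frob
    refine Finset.sum_nonneg fun i _ => Finset.sum_nonneg fun j _ => mul_self_nonneg _
  have hkey := key_cs n hn B htr
  rw [← hs] at hkey
  rcases le_or_gt (2 * β₃) β₁ with hc | hc
  · have h2 : min β₃ ((2 * β₁ - β₃) / 3) ≤ β₃ := min_le_left _ _
    nlinarith [sq_nonneg s]
  · have h2 : min β₃ ((2 * β₁ - β₃) / 3) ≤ (2 * β₁ - β₃) / 3 := min_le_right _ _
    nlinarith [sq_nonneg s]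
end
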